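/- Let X be a compact metric space and φ : X → X a homeomorphism admitting a convergent trajectory, i.e., there exists x ∈ X with φ(x) ≠ x such that either (φ^k(x))_{k≥0} or (φ^{-k}(x))_{k≥0} converges. Then φ is not almost automorphic. -/

import Mathlib

open Filter Topology

/-- A point `x` is almost automorphic for a homeomorphism `φ` if whenever
`φ^{kᵢ}(x) → y` along a sequence of integers `kᵢ`, one has `φ^{-kᵢ}(y) → x`. -/
def IsAlmostAutomorphicPt {X : Type*} [TopologicalSpace X] (T : X ≃ₜ X) (x : X) : Prop :=
  ∀ (y : X) (k : ℕ → ℤ), Tendsto (fun i => (T.toEquiv ^ (k i)) x) atTop (𝓝 y) →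
    Tendsto (fun i => (T.toEquiv ^ (-(k i))) y) atTop (𝓝 x)

/-- `T` is almost automorphic if every point is almost automorphic for `T`. -/
def AlmostAutomorphic {X : Type*} [TopologicalSpace X] (T : X ≃ₜ X) : Prop :=
  ∀ x : X, IsAlmostAutomorphicPt T x

/-- A fixed point of an equiv is fixed by every integer power. -/
lemma zpow_fixed {X : Type*} (e : Equiv.Perm X) {y : X} (hy : e y = y) (m : ℤ) :
    (e ^ m) y = y := by
  induction m using Int.induction_on with
  | zero => simp
  | succ n ih => rw [add_comm, zpow_add, zpow_one, Equiv.Perm.mul_apply, ih, hy]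
  | pred n ih =>
      have hy' : e⁻¹ y = y := by
        conv_lhs => rw [← hy]
        simp
      rw [sub_eq_add_neg, add_comm, zpow_add, Equiv.Perm.mul_apply, zpow_neg_one, ih, hy']

theorem not_almostAutomorphic_of_convergent_trajectory {X : Type*} [MetricSpace X]
    [CompactSpace X] (φ : X ≃ₜ X)
    (h : ∃ x : X, φ x ≠ x ∧ ((∃ y, Tendsto (fun k : ℕ => φ^[k] x) atTop (𝓝 y)) ∨
      (∃ y, Tendsto (fun k : ℕ => (φ.symm)^[k] x) atTop (𝓝 y)))) :
    ¬ AlmostAutomorphic φ := by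
  intro hAA
  obtain ⟨x, hx, hcase⟩ := h
  rcases hcase with ⟨y, hy⟩ | ⟨y, hy⟩
  · -- forward orbit converges to y; y is a fixed point
    have hfix : φ y = y := by
      have h1 : Tendsto (fun k : ℕ => φ^[k + 1] x) atTop (𝓝 y) :=
        hy.comp (tendsto_add_atTop_nat 1)
      have h2 : Tendsto (fun k : ℕ => φ (φ^[k] x)) atTop (𝓝 (φ y)) :=
        (φ.continuous.tendsto y).comp hy
      have : (fun k : ℕ => φ^[k + 1] x) = fun k : ℕ => φ (φ^[k] x) := by
        funext k; rw [Function.iterate_succ_apply' φ k x]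
      rw [this] at h1
      exact tendsto_nhds_unique h2 h1
    have hy' : Tendsto (fun i : ℕ => (φ.toEquiv ^ ((i : ℤ))) x) atTop (𝓝 y) := by
      have : (fun i : ℕ => (φ.toEquiv ^ ((i : ℤ))) x) = fun i : ℕ => φ^[i] x := by
        funext i
        rw [zpow_natCast, ← Equiv.Perm.iterate_eq_pow]
        rfl
      rw [this]; exact hy
    have hback := hAA x y (fun i : ℕ => (i : ℤ)) hy'
    have hconst : (fun i : ℕ => (φ.toEquiv ^ (-(i : ℤ))) y) = fun _ : ℕ => y := by
      funext i; exact zpow_fixed φ.toEquiv hfix _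
    rw [hconst] at hback
    have hyx : y = x := (tendsto_nhds_unique hback tendsto_const_nhds).symm
    exact hx (by rw [← hyx]; exact hyx ▸ hfix)
  · -- backward orbit converges to y; y is a fixed point
    have hfix' : φ.symm y = y := by
      have h1 : Tendsto (fun k : ℕ => (φ.symm)^[k + 1] x) atTop (𝓝 y) :=
        hy.comp (tendsto_add_atTop_nat 1)
      have h2 : Tendsto (fun k : ℕ => φ.symm ((φ.symm)^[k] x)) atTop (𝓝 (φ.symm y)) :=
        (φ.symm.continuous.tendsto y).comp hy
      have : (fun k : ℕ => (φ.symm)^[k + 1] x) = fun k : ℕ => φ.symm ((φ.symm)^[k] x) := by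
        funext k; rw [Function.iterate_succ_apply' φ.symm k x]
      rw [this] at h1
      exact tendsto_nhds_unique h2 h1
    have hfix : φ y = y := by
      conv_lhs => rw [← hfix']
      simp
    have hy' : Tendsto (fun i : ℕ => (φ.toEquiv ^ (-(i : ℤ)))  x) atTop (𝓝 y) := by
      have : (fun i : ℕ => (φ.toEquiv ^ (-(i : ℤ))) x) = fun i : ℕ => (φ.symm)^[i] x := by
        funext i
        rw [zpow_neg, zpow_natCast, ← inv_pow, ← Equiv.Perm.iterate_eq_pow]
        rfl
      rw [this]; exact hy
    have hback := hAA x y (fun i : ℕ => -(i : ℤ)) hy'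
    have hconst : (fun i : ℕ => (φ.toEquiv ^ (-(-(i : ℤ)))) y) = fun _ : ℕ => y := by
      funext i; exact zpow_fixed φ.toEquiv hfix _
    rw [hconst] at hback
    have hyx : y = x := (tendsto_nhds_unique hback tendsto_const_nhds).symm
    exact hx (by rw [← hyx]; exact hyx ▸ hfix)
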